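/- With the sequence d₀ = gcd(a, m), mᵢ = m₍ᵢ₋₁₎/dᵢ, d₍ᵢ₊₁₎ = gcd(dᵢ, mᵢ), and s the least index with d_s = 1, for each i with 0 ≤ i ≤ s−1 the cofactor dᵢ' = dᵢ / d₍ᵢ₊₁₎ satisfies gcd(dᵢ', m_s) = 1. -/
import Mathlib


def dm (a : ℤ) (m : ℕ) : ℕ → ℕ × ℕ
  | 0 => (Int.gcd a m, m / Int.gcd a m)
  | i + 1 =>
      let p := dm a m i
      let d := Nat.gcd p.1 p.2
      (d, p.2 / d)

lemma dm_m_pos (a : ℤ) (m : ℕ) (hm : 0 < m) : ∀ i, 0 < (dm a m i).2 := by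
  intro i
  induction i with
  | zero =>
      simp only [dm]
      have hdvd : Int.gcd a m ∣ m := by
        have := Nat.gcd_dvd_right a.natAbs m
        simpa [Int.gcd] using this
      have hgpos : 0 < Int.gcd a m := by
        have : (m : ℤ) ≠ 0 := by exact_mod_cast hm.ne'
        exact Int.gcd_pos_of_ne_zero_right a this
      exact Nat.div_pos (Nat.le_of_dvd hm hdvd) hgpos
  | succ n ih =>
      simp only [dm]
      exact Nat.div_pos (Nat.le_of_dvd ih (Nat.gcd_dvd_right _ _))
        (Nat.gcd_pos_of_pos_right _ ih)

lemma dm_m_dvd (a : ℤ) (m : ℕ) : ∀ i j, i ≤ j → (dm a m j).2 ∣ (dm a m i).2 := by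
  intro i j hij
  induction j with
  | zero => simp_all
  | succ n ih =>
      rcases Nat.lt_or_ge i (n+1) with h | h
      · refine dvd_trans ?_ (ih (Nat.lt_succ_iff.mp h))
        show (dm a m (n+1)).2 ∣ (dm a m n).2
        simp only [dm]
        exact Nat.div_dvd_of_dvd (Nat.gcd_dvd_right _ _)
      · have : i = n + 1 := le_antisymm hij h
        subst this; rfl

theorem stmt5 (a : ℤ) (m : ℕ) (hm : 0 < m) (s : ℕ)
    (hs : (dm a m s).1 = 1) (hleast : ∀ t < s, (dm a m t).1 ≠ 1) :
    ∀ i < s, Nat.gcd ((dm a m i).1 / (dm a m (i + 1)).1) (dm a m s).2 = 1 := by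
  intro i hi
  have hpos := dm_m_pos a m hm i
  have hg : 0 < Nat.gcd (dm a m i).1 (dm a m i).2 := Nat.gcd_pos_of_pos_right _ hpos
  have hcop : Nat.Coprime ((dm a m i).1 / (dm a m (i+1)).1) (dm a m (i+1)).2 := by
    show Nat.Coprime ((dm a m i).1 / (dm a m i : ℕ × ℕ).fst.gcd (dm a m i).2)
      ((dm a m i).2 / (dm a m i : ℕ × ℕ).fst.gcd (dm a m i).2)
    exact Nat.coprime_div_gcd_div_gcd hg
  exact hcop.coprime_dvd_right (dm_m_dvd a m (i+1) s hi)
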